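/- Let p be a prime with p ≡ 1 (mod 4), and let L, M be integers with p = L² + 4M². If q is an odd prime with q ≠ p and q divides M, then q* is a biquadratic residue modulo p. -/

import Mathlib

lemma aux0 (p q : ℕ) (hp : p.Prime) (L M A B : ℤ)
    (h1 : (p:ℤ) = L^2 + 4*M^2) (h2 : (p:ℤ) = A^2 + B^2) (hA : Odd A)
    (hq : q.Prime) (hqp : q ≠ p) (hdvdM : (q:ℤ) ∣ M)
    (hdk : (p:ℤ) ∣ 2*A*M - B*L) : (q:ℤ) ∣ B := by
  have hqZ : Prime (q:ℤ) := Nat.prime_iff_prime_int.mp hq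
  have hqnp : ¬ ((q:ℤ) ∣ (p:ℤ)) := by
    intro h
    exact hqp <| (Nat.prime_dvd_prime_iff_eq hq hp).mp (Int.natCast_dvd_natCast.mp h)
  have hqL : ¬ ((q:ℤ) ∣ L) := fun h => hqnp (h1 ▸ (by
    obtain ⟨m, hm⟩ := hdvdM; obtain ⟨l, hl⟩ := h
    exact ⟨q*l^2 + 4*q*m^2, by rw [hl, hm]; ring⟩))
  have hppos : (0:ℤ) < p := by exact_mod_cast hp.pos
  obtain ⟨k, hk⟩ := hdk
  have key : (A*L + 2*B*M)^2 = (p:ℤ)^2*(1 - k^2) := by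
    have hp2 : (p:ℤ)*(p:ℤ) = (A^2+B^2)*(L^2+4*M^2) := by rw [← h1, ← h2]
    linear_combination (-1:ℤ) * hp2 - ((p:ℤ)*k + 2*A*M - B*L) * hk
  have hk2 : k^2 ≤ 1 := by nlinarith [sq_nonneg (A*L + 2*B*M), sq_nonneg ((p:ℤ))]
  have hkcase : k = 0 ∨ k^2 = 1 := by
    rcases eq_or_ne k 0 with h | h
    · exact Or.inl h
    · right
      have h1' : 1 ≤ k^2 := by
        rcases lt_or_gt_of_ne h with h' | h' <;> nlinarith
      omega
  rcases hkcase with rfl | hk1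
  · -- k = 0 : B*L = 2*A*M
    have hBL : B*L = 2*A*M := by linarith [hk]
    have hdvd : (q:ℤ) ∣ B*L := hBL ▸ (hdvdM.mul_left (2*A))
    rcases hqZ.dvd_mul.mp hdvd with h | h
    · exact h
    · exact absurd h hqL
  · -- k² = 1 : contradiction with A odd
    exfalso
    have hAL : A*L + 2*B*M = 0 := by
      have : (A*L + 2*B*M)^2 = 0 := by rw [key, hk1]; ring
      exact pow_eq_zero_iff (by norm_num) |>.mp this
    have hAk : A*k = 2*M := by
      have h3 : (p:ℤ) * (A * k - 2*M) = 0 := by linear_combination (-A) * hk - B * hAL - 2*M*h2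
      rcases mul_eq_zero.mp h3 with h | h
      · exact absurd h hppos.ne'
      · linarith
    have : Even A := ⟨M*k, by nlinarith [hk1]⟩
    exact ((Int.not_odd_iff_even).mpr this) hA

lemma auxB (p q : ℕ) (hp : p.Prime) (L M A B : ℤ)
    (h1 : (p:ℤ) = L^2 + 4*M^2) (h2 : (p:ℤ) = A^2 + B^2) (hA : Odd A)
    (hq : q.Prime) (hqp : q ≠ p) (hdvdM : (q:ℤ) ∣ M) : (q:ℤ) ∣ B := by
  have hpZ : Prime (p:ℤ) := Nat.prime_iff_prime_int.mp hp
  have hprod : (p:ℤ) ∣ (2*A*M - B*L) * (2*A*M + B*L) := by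
    refine ⟨A^2 - L^2, ?_⟩
    linear_combination (-(A^2))*h1 + (L^2)*h2
  rcases hpZ.dvd_mul.mp hprod with h | h
  · exact aux0 p q hp L M A B h1 h2 hA hq hqp hdvdM h
  · refine aux0 p q hp L (-M) A B (by linear_combination h1) h2 hA hq hqp hdvdM.neg_right ?_
    have : 2*A*(-M) - B*L = -(2*A*M + B*L) := by ring
    rw [this]
    exact h.neg_right


open Finset in
lemma jacobi_re_odd (p : ℕ) [hpi : Fact p.Prime] (hp2 : p ≠ 2)
    (χ : MulChar (ZMod p) GaussianInt) (hχ4 : χ ^ 4 = 1) :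
    Odd (jacobiSum χ χ).re := by
  have hp0 : NeZero p := ⟨hpi.out.ne_zero⟩
  have h2 : (2 : ZMod p) ≠ 0 := by
    intro h
    have hd : p ∣ 2 := by exact_mod_cast (ZMod.natCast_eq_zero_iff 2 p).mp (by exact_mod_cast h)
    exact hp2 ((Nat.prime_dvd_prime_iff_eq hpi.out Nat.prime_two).mp hd)
  set c : ZMod p := (2 : ZMod p)⁻¹ with hcdef
  have hcc : c + c = 1 := by rw [← two_mul]; exact mul_inv_cancel₀ h2
  have hc : (1 : ZMod p) - c = c := by rw [sub_eq_iff_eq_add, ← hcc]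
  have hcne : c ≠ 0 := by
    intro h; rw [h, add_zero] at hcc; simp at hcc
  have hfix : ∀ t : ZMod p, (1 : ZMod p) - t = t → t = c := by
    intro t ht
    apply mul_left_cancel₀ h2
    have h2c : (2:ZMod p) * c = 1 := mul_inv_cancel₀ h2
    have h2t : (2:ZMod p) * t = 1 := by
      rw [two_mul]; nth_rewrite 1 [← ht]; ring
    rw [h2c, h2t]
  set f : ZMod p → GaussianInt := fun t => χ t * χ (1 - t) with hfdef
  have hval : ∀ t : ZMod p, t ≠ c → (1 - t).val ≠ t.val := by
    intro t ht h
    exact ht (hfix t (ZMod.val_injective p h))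
  have herase : (univ.filter fun t : ZMod p => ¬ t.val < (1-t).val).erase c
      = univ.filter (fun t : ZMod p => (1-t).val < t.val) := by
    ext t
    simp only [mem_erase, mem_filter, mem_univ, true_and, not_lt]
    constructor
    · rintro ⟨htc, hle⟩
      exact lt_of_le_of_ne hle (hval t htc)
    · intro hlt
      refine ⟨fun h => ?_, le_of_lt hlt⟩
      subst h; rw [hc] at hlt; exact lt_irrefl _ hlt
  have hmemc : c ∈ univ.filter fun t : ZMod p => ¬ t.val < (1-t).val := by
    simp only [mem_filter, mem_univ, true_and, not_lt]
    rw [hc]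
  have hbij : ∑ t ∈ univ.filter (fun t : ZMod p => (1-t).val < t.val), f t
      = ∑ t ∈ univ.filter (fun t : ZMod p => t.val < (1-t).val), f t := by
    refine sum_nbij' (fun t => 1 - t) (fun t => 1 - t) ?_ ?_ ?_ ?_ ?_ <;>
      intro a ha <;> simp only [mem_filter, mem_univ, true_and, sub_sub_cancel] at ha ⊢
    · exact ha
    · exact ha
    · simp only [hfdef, sub_sub_cancel]; exact mul_comm _ _
  have hsplit : jacobiSum χ χ
      = ((2:ℤ) : GaussianInt) * (∑ t ∈ univ.filter (fun t : ZMod p => t.val < (1-t).val), f t)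
        + f c := by
    have h1 : jacobiSum χ χ = ∑ t : ZMod p, f t := rfl
    rw [h1, ← sum_filter_add_sum_filter_not univ (fun t : ZMod p => t.val < (1-t).val) f,
      ← Finset.add_sum_erase _ f hmemc, herase, hbij]
    push_cast
    ring
  have hfc : f c * f c = 1 := by
    have : f c = χ c * χ c := by rw [hfdef]; simp only [hc]
    rw [this]
    have h4 : χ c ^ 4 = 1 := by
      rw [← MulChar.pow_apply' χ (by norm_num) c, hχ4,
        MulChar.one_apply (isUnit_iff_ne_zero.mpr hcne)]
    calc χ c * χ c * (χ c * χ c) = χ c ^ 4 := by ring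
    _ = 1 := h4
  rcases mul_self_eq_one_iff.mp hfc with h | h <;>
    rw [hsplit, h] <;>
    simp only [Zsqrtd.re_add, Zsqrtd.re_smul] <;>
    [exact ⟨_, by norm_num [Zsqrtd.re_one]; ring⟩;
     exact ⟨(∑ t ∈ univ.filter (fun t : ZMod p => t.val < (1-t).val), f t).re - 1, by
       norm_num [Zsqrtd.re_neg, Zsqrtd.re_one]; ring⟩]


open Finset GaussianInt

lemma gi_isq : (Zsqrtd.sqrtd : GaussianInt) * Zsqrtd.sqrtd = -1 := by
  rw [Zsqrtd.dmuld]; rfl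

lemma gi_ipow4 : (Zsqrtd.sqrtd : GaussianInt) ^ 4 = 1 := by
  have : (Zsqrtd.sqrtd : GaussianInt)^4 = (Zsqrtd.sqrtd * Zsqrtd.sqrtd) * (Zsqrtd.sqrtd * Zsqrtd.sqrtd) := by ring
  rw [this, gi_isq]; ring

lemma gi_i_ne_one : (Zsqrtd.sqrtd : GaussianInt) ≠ 1 := by
  intro h
  have := congrArg Zsqrtd.re h
  simp at this

lemma gi_isq_ne_one : (Zsqrtd.sqrtd : GaussianInt) * Zsqrtd.sqrtd ≠ 1 := by
  rw [gi_isq]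
  intro h
  have := congrArg Zsqrtd.re h
  simp at this

noncomputable def giu : GaussianIntˣ :=
  ⟨Zsqrtd.sqrtd, -Zsqrtd.sqrtd, by rw [mul_neg, gi_isq]; ring, by rw [neg_mul, gi_isq]; ring⟩

lemma giu_pow4 : giu ^ 4 = 1 := by
  apply Units.ext
  rw [Units.val_pow_eq_pow_val, Units.val_one]
  exact gi_ipow4

lemma gi_order : orderOf (Zsqrtd.sqrtd : GaussianInt) = 4 := by
  have h1 : (Zsqrtd.sqrtd : GaussianInt) ^ 2 ^ 1 ≠ 1 := by
    rw [pow_one, sq, gi_isq]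
    intro h
    have := congrArg Zsqrtd.re h
    simp at this
  have h2 : (Zsqrtd.sqrtd : GaussianInt) ^ 2 ^ 2 = 1 := gi_ipow4
  exact orderOf_eq_prime_pow h1 h2

lemma aux_z {K : Type*} [Field K] (φ : GaussianInt →+* K) (hK2 : (-1:K) ≠ 1)
    (z : GaussianInt) (hz4 : z ^ 4 = 1) (h1 : φ z = 1) : z = 1 := by
  have h2 : (z^2 - 1) * (z^2 + 1) = 0 := by linear_combination hz4
  rcases mul_eq_zero.mp h2 with h | h
  · have hsq : z^2 = 1 := by linear_combination h
    rw [sq] at hsq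
    rcases mul_self_eq_one_iff.mp hsq with h' | h'
    · exact h'
    · exfalso
      rw [h', map_neg, map_one] at h1
      exact hK2 h1
  · exfalso
    have hz2 : z^2 = -1 := by linear_combination h
    have h3 : φ z ^ 2 = -1 := by rw [← map_pow, hz2, map_neg, map_one]
    rw [h1, one_pow] at h3
    exact hK2 h3.symm

/-- If p ≡ 1 (mod 4) is prime, p = L² + 4M², and q is an odd prime, q ≠ p, dividing M,
then q* = (-1)^((q-1)/2)·q is a biquadratic residue modulo p. -/
theorem biquadratic_residue_of_dvd_M (p : ℕ) (hp : p.Prime) (hp4 : p % 4 = 1)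
    (L M : ℤ) (hLM : (p : ℤ) = L ^ 2 + 4 * M ^ 2)
    (q : ℕ) (hq : q.Prime) (hq2 : Odd q) (hqp : q ≠ p) (hdvd : (q : ℤ) ∣ M) :
    ∃ x : ℤ, x ^ 4 ≡ (-1) ^ ((q - 1) / 2) * (q : ℤ) [ZMOD (p : ℤ)] := by
  haveI : Fact p.Prime := ⟨hp⟩
  haveI : Fact q.Prime := ⟨hq⟩
  classical
  -- generator of (ZMod p)ˣ
  obtain ⟨g, hg⟩ := IsCyclic.exists_generator (α := (ZMod p)ˣ)
  have hcard : Fintype.card (ZMod p)ˣ = p - 1 := ZMod.card_units p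
  obtain ⟨s, hs⟩ : ∃ s, p - 1 = 4 * s := by
    refine ⟨(p-1)/4, ?_⟩
    omega
  have hζmem : giu ∈ rootsOfUnity (Fintype.card (ZMod p)ˣ) GaussianInt := by
    rw [mem_rootsOfUnity, hcard, hs, pow_mul, giu_pow4, one_pow]
  set χ : MulChar (ZMod p) GaussianInt := MulChar.ofRootOfUnity hζmem hg with hχdef
  have hχg : χ (g : ZMod p) = Zsqrtd.sqrtd := by
    have := MulChar.ofRootOfUnity_spec hζmem hg
    rw [← hχdef] at this
    exact this
  have hχ4 : χ ^ 4 = 1 := by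
    rw [MulChar.eq_iff hg]
    rw [MulChar.pow_apply' χ (by norm_num), hχg, gi_ipow4, MulChar.one_apply_coe]
  -- fourth power extraction
  have hfourth : ∀ a : ZMod p, a ≠ 0 → χ a = 1 → ∃ x : ZMod p, x ^ 4 = a := by
    intro a ha h1
    lift a to (ZMod p)ˣ using isUnit_iff_ne_zero.mpr ha with au hau
    obtain ⟨m, hm⟩ := (mem_powers_iff_mem_zpowers.mpr (hg au))
    have hχa : χ (au : ZMod p) = (Zsqrtd.sqrtd : GaussianInt) ^ m := by
      rw [← hm, Units.val_pow_eq_pow_val, map_pow, hχg]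
    rw [h1] at hχa
    have hdvd4 : 4 ∣ m := by
      rw [← gi_order]
      exact orderOf_dvd_of_pow_eq_one hχa.symm
    obtain ⟨t, rfl⟩ := hdvd4
    refine ⟨((g ^ t : (ZMod p)ˣ) : ZMod p), ?_⟩
    have hm' : g ^ (4 * t) = au := hm
    rw [← Units.val_pow_eq_pow_val, ← pow_mul, mul_comm t 4, hm']
  -- the Jacobi sum and its norm
  set J : GaussianInt := jacobiSum χ χ with hJdef
  set A : ℤ := J.re with hAdef
  set B : ℤ := J.im with hBdef
  have hpcast : ((Fintype.card (ZMod p) : ℂ)) = (p : ℂ) := by rw [ZMod.card]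
  -- the complex-valued character
  set χc : MulChar (ZMod p) ℂ := χ.ringHomComp toComplex with hχcdef
  have hχcg : χc (g : ZMod p) = Complex.I := by
    rw [hχcdef, MulChar.ringHomComp_apply, hχg]
    simp [toComplex_def]
  have hχc1 : χc ≠ 1 := by
    intro h
    rw [h, MulChar.one_apply_coe] at hχcg
    have := congrArg Complex.im hχcg
    simp at this
  have hχcsq : χc * χc ≠ 1 := by
    intro h
    have : (χc * χc) (g : ZMod p) = 1 := by rw [h, MulChar.one_apply_coe]
    rw [MulChar.mul_apply, hχcg, Complex.I_mul_I] at this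
    norm_num at this
  have hchar : ringChar ℂ ≠ ringChar (ZMod p) := by
    rw [ringChar.eq_zero, ZMod.ringChar_zmod_n]
    exact fun h => hp.ne_zero h.symm
  have hnormC := jacobiSum_mul_jacobiSum_inv hchar hχc1 hχc1 hχcsq
  have hinvstar : χc⁻¹ = star χc := (MulChar.star_eq_inv χc).symm
  have hjstar : jacobiSum χc⁻¹ χc⁻¹ = star (jacobiSum χc χc) := by
    rw [hinvstar]
    exact jacobiSum_ringHomComp χc χc (starRingEnd ℂ)
  have hjc : jacobiSum χc χc = toComplex J := by
    rw [hχcdef, hJdef]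
    exact jacobiSum_ringHomComp χ χ toComplex
  have hnorm : A ^ 2 + B ^ 2 = (p : ℤ) := by
    have h1 : toComplex J * star (toComplex J) = (p : ℂ) := by
      rw [← hjc, ← hjstar, hnormC, hpcast]
    have h2 : ((J.norm : ℂ)) = (p : ℂ) := by
      rw [intCast_complex_norm, ← Complex.mul_conj]
      exact h1
    have h3 : J.norm = (p : ℤ) := by exact_mod_cast h2
    rw [← h3, Zsqrtd.norm_def, hAdef, hBdef]
    ring
  have hAodd : Odd A := jacobi_re_odd p (by omega) χ hχ4
  have hqB : (q:ℤ) ∣ B := auxB p q hp L M A B hLM hnorm.symm hAodd hq hqp hdvd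
  -- characteristic q side
  haveI : CharP (AlgebraicClosure (ZMod q)) q :=
    charP_of_injective_algebraMap (algebraMap (ZMod q) (AlgebraicClosure (ZMod q))).injective q
  have hne : ringChar (AlgebraicClosure (ZMod q)) ≠ ringChar (ZMod p) := by
    rw [ringChar.eq (AlgebraicClosure (ZMod q)) q, ZMod.ringChar_zmod_n]
    exact hqp
  set ψp := AddChar.FiniteField.primitiveChar (ZMod p) (AlgebraicClosure (ZMod q)) hne with hψpdef
  set K := CyclotomicField ψp.n (AlgebraicClosure (ZMod q)) with hKdef
  haveI hKq : CharP K q :=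
    charP_of_injective_algebraMap (algebraMap (AlgebraicClosure (ZMod q)) K).injective q
  obtain ⟨i₀, hi₀⟩ := IsAlgClosed.exists_pow_nat_eq (-1 : AlgebraicClosure (ZMod q)) zero_lt_two
  set ii : K := algebraMap _ K i₀ with hiidef
  have hii : ii * ii = (-1 : K) := by
    rw [hiidef, ← map_mul, ← sq, hi₀, map_neg, map_one]
  set φ : GaussianInt →+* K := Zsqrtd.lift ⟨ii, by rw [hii]; norm_num⟩ with hφdef
  have hK2 : ((-1 : K)) ≠ 1 := by
    intro h
    have h2 : ((2:ℕ) : K) = 0 := by push_cast; linear_combination -h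
    have hdq := (CharP.cast_eq_zero_iff K q 2).mp h2
    have := (Nat.prime_dvd_prime_iff_eq hq Nat.prime_two).mp hdq
    subst this
    exact (by decide : ¬ Odd 2) hq2
  set χK : MulChar (ZMod p) K := χ.ringHomComp φ with hχKdef
  have hφi : φ Zsqrtd.sqrtd = ii := by
    show ((0:ℤ):K) + ((1:ℤ):K) * ii = ii
    push_cast
    ring
  have hχKg : χK (g : ZMod p) = ii := by rw [hχKdef, MulChar.ringHomComp_apply, hχg, hφi]
  have hii4 : ii ^ 4 = 1 := by
    have h4 : ii^4 = (ii*ii)*(ii*ii) := by ring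
    rw [h4, hii]; ring
  have hχK4 : χK ^ 4 = 1 := by
    rw [MulChar.eq_iff hg, MulChar.pow_apply' _ (by norm_num), hχKg, hii4, MulChar.one_apply_coe]
  have hχK1 : χK ≠ 1 := by
    intro h
    rw [h, MulChar.one_apply_coe] at hχKg
    rw [← hχKg] at hii
    have h1 : (-1:K) = 1 := by linear_combination -hii
    exact hK2 h1
  have hχKsq : χK * χK ≠ 1 := by
    intro h
    have h1 : (χK * χK) ((g : (ZMod p)ˣ) : ZMod p) = 1 := by rw [h, MulChar.one_apply_coe]
    rw [MulChar.mul_apply, hχKg, hii] at h1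
    exact hK2 h1
  have hcard0 : ((Fintype.card (ZMod p) : K)) ≠ 0 := by
    rw [ZMod.card]
    intro h
    have hdq := (CharP.cast_eq_zero_iff K q p).mp h
    exact hqp ((Nat.prime_dvd_prime_iff_eq hq hp).mp hdq)
  have hpK0 : ((p : K)) ≠ 0 := by rwa [ZMod.card] at hcard0
  set g0 := gaussSum χK ψp.char with hg0def
  set g2 := gaussSum (χK * χK) ψp.char with hg2def
  have hg0ne : g0 ≠ 0 := gaussSum_ne_zero_of_nontrivial hcard0 hχK1 ψp.prim
  have hBK : ((B : K)) = 0 := by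
    obtain ⟨b, hb⟩ := hqB
    rw [hb]
    push_cast
    rw [CharP.cast_eq_zero K q]
    ring
  have hJK : jacobiSum χK χK = (A : K) := by
    have hJdec : J = (A : GaussianInt) + Zsqrtd.sqrtd * (B : GaussianInt) := by
      rw [hAdef, hBdef]
      ext <;> simp
    rw [hχKdef, jacobiSum_ringHomComp, ← hJdef, hJdec, map_add, map_mul, map_intCast,
      map_intCast, hφi, hBK]
    ring
  have hpA : ((p:K)) = (A:K)^2 := by
    have h1 : ((p:ℤ):K) = ((A^2+B^2 : ℤ):K) := by rw [hnorm]
    push_cast at h1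
    rw [h1, hBK]
    ring
  have hqA : ¬ ((q:ℤ) ∣ A) := by
    intro h
    have hqp' : (q:ℤ) ∣ (p:ℤ) := by
      rw [← hnorm]
      exact dvd_add (dvd_pow h (by norm_num)) (dvd_pow hqB (by norm_num))
    exact hqp ((Nat.prime_dvd_prime_iff_eq hq hp).mp (Int.natCast_dvd_natCast.mp hqp'))
  have hAK0 : (A : K) ≠ 0 := fun h => hqA ((CharP.intCast_eq_zero_iff K q A).mp h)
  have hAq1 : ∀ m : ℕ, m = q - 1 → (A : K) ^ m = 1 := by
    intro m hm
    have hAzq : ((A : ZMod q)) ≠ 0 := by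
      rw [Ne, ZMod.intCast_zmod_eq_zero_iff_dvd]
      exact hqA
    have h1 : ((A : ZMod q)) ^ (q - 1) = 1 := ZMod.pow_card_sub_one_eq_one hAzq
    have h2 := congrArg (ZMod.castHom (dvd_refl q) K) h1
    rw [map_pow, map_one, map_intCast] at h2
    rw [hm]
    exact h2
  -- Frobenius for Gauss sums
  have hfrob : ∀ χ' : MulChar (ZMod p) K, (gaussSum χ' ψp.char) ^ q
      = gaussSum (χ' ^ q) ((ψp.char).mulShift ((q : ZMod p))) := by
    intro χ'
    rw [gaussSum, gaussSum, sum_pow_char]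
    refine Finset.sum_congr rfl fun t _ => ?_
    rw [mul_pow, AddChar.mulShift_apply, MulChar.pow_apply' _ hq.ne_zero t, ← nsmul_eq_mul,
      AddChar.map_nsmul_eq_pow]
  have hqF : ((q : ZMod p)) ≠ 0 := by
    rw [Ne, ZMod.natCast_eq_zero_iff]
    intro h
    exact hqp ((Nat.prime_dvd_prime_iff_eq hp hq).mp h).symm
  set qu : (ZMod p)ˣ := Units.mk0 _ hqF with hqudef
  have hquv : (qu : ZMod p) = (q : ZMod p) := rfl
  -- main Gauss sum identities
  have hgJ : g2 * (A : K) = g0 * g0 := by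
    rw [← hJK, hg0def, hg2def]
    exact jacobiSum_mul_nontrivial hχKsq ψp.char
  have hw2 : χK (-1 : ZMod p) * χK (-1 : ZMod p) = 1 := by
    rw [← map_mul, neg_mul_neg, one_mul, map_one]
  have hpsi : ∀ χ' : MulChar (ZMod p) K, χ' (-1 : ZMod p) * gaussSum χ' (ψp.char)⁻¹
      = gaussSum χ' ψp.char := by
    intro χ'
    rw [AddChar.inv_mulShift]
    have h1 := gaussSum_mulShift χ' ψp.char (-1 : (ZMod p)ˣ)
    rw [Units.val_neg, Units.val_one] at h1
    exact h1
  have hg2sq : g2 * g2 = (p : K) := by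
    have h1 := gaussSum_mul_gaussSum_eq_card hχKsq ψp.prim
    have hinv : (χK * χK)⁻¹ = χK * χK := by
      apply inv_eq_of_mul_eq_one_right
      have h4 : (χK * χK) * (χK * χK) = χK ^ 4 := by
        rw [show (4:ℕ) = 2*2 from rfl, pow_mul, pow_two, pow_two]
      rw [h4, hχK4]
    rw [hinv] at h1
    have hminus : (χK * χK) (-1 : ZMod p) = 1 := by
      rw [MulChar.mul_apply, hw2]
    have h2 := hpsi (χK * χK)
    rw [hminus, one_mul] at h2
    rw [h2, ZMod.card, ← hg2def] at h1
    exact h1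
  -- case split on q mod 4
  have hq14 : q % 4 = 1 ∨ q % 4 = 3 := by
    have := Nat.odd_iff.mp hq2
    omega
  -- the element whose character value we compute, and the final packaging
  have final : ∀ x : ZMod p, x ^ 4 = ((((-1:ℤ)) ^ ((q-1)/2) * (q:ℤ) : ℤ) : ZMod p) →
      ∃ x : ℤ, x ^ 4 ≡ (-1) ^ ((q - 1) / 2) * (q : ℤ) [ZMOD (p : ℤ)] := by
    intro x hx
    refine ⟨(x.val : ℤ), ?_⟩
    have h1 : ((((x.val : ℤ)) ^ 4 : ℤ) : ZMod p) = ((((-1:ℤ)) ^ ((q-1)/2) * (q:ℤ) : ℤ) : ZMod p) := by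
      push_cast
      rw [ZMod.natCast_val, ZMod.cast_id]
      rw [hx]
      push_cast
      ring
    exact (ZMod.intCast_eq_intCast_iff _ _ _).mp h1
  rcases hq14 with hqm | hqm
  · -- q ≡ 1 mod 4
    obtain ⟨k, hk⟩ : ∃ k, q = 4 * k + 1 := ⟨q / 4, by omega⟩
    have hχKq : χK ^ q = χK := by
      have e0 : χK ^ q = χK ^ (4*k+1) := congrArg (χK ^ ·) hk
      rw [e0, pow_succ, pow_mul, hχK4, one_pow, one_mul]
    have hg0q : g0 ^ q = g0 := by
      have e1 : g0 ^ q = (g0 * g0) ^ (2 * k) * g0 := by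
        have e0 : g0 ^ q = g0 ^ (4*k+1) := congrArg (g0 ^ ·) hk
        rw [e0, ← pow_two, ← pow_mul, ← pow_succ]
        congr 1
        omega
      rw [e1, ← hgJ, mul_pow]
      have e2 : g2 ^ (2 * k) = ((p:K)) ^ k := by
        rw [pow_mul, pow_two, hg2sq]
      rw [e2, hpA, ← pow_mul, ← pow_add]
      rw [hAq1 (2*k + 2*k) (by omega), one_mul]
    have hfr := hfrob χK
    rw [hχKq, hg0q] at hfr
    have hms := gaussSum_mulShift χK ψp.char qu
    rw [hquv] at hms
    rw [← hfr] at hms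
    -- hms : χK (q:ZMod p) * g0 = g0
    have hval : χK ((q : ZMod p)) = 1 := by
      have := mul_right_cancel₀ hg0ne (hms.trans (one_mul g0).symm)
      exact this
    have hz4 : χ ((q : ZMod p)) ^ 4 = 1 := by
      rw [← MulChar.pow_apply' _ (by norm_num), hχ4,
        MulChar.one_apply (isUnit_iff_ne_zero.mpr hqF)]
    have hz1 : χ ((q : ZMod p)) = 1 :=
      aux_z φ hK2 _ hz4 (by rw [← MulChar.ringHomComp_apply, ← hχKdef]; exact hval)
    obtain ⟨x, hx⟩ := hfourth ((q : ZMod p)) hqF hz1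
    refine final x ?_
    rw [hx]
    have hev : ((-1:ℤ)) ^ ((q-1)/2) = 1 := by
      have h2k : (q-1)/2 = 2*k := by omega
      rw [h2k, pow_mul]
      norm_num
    rw [hev]
    push_cast
    ring
  · -- q ≡ 3 mod 4
    obtain ⟨k, hk⟩ : ∃ k, q = 4 * k + 3 := ⟨q / 4, by omega⟩
    have hχKq : χK ^ q = χK ^ 3 := by
      have e0 : χK ^ q = χK ^ (4*k+3) := congrArg (χK ^ ·) hk
      rw [e0, pow_add, pow_mul, hχK4, one_pow, one_mul]
    set g3 := gaussSum (χK ^ 3) ψp.char with hg3def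
    have hg0qe : g0 ^ q = g2 * (A:K) ^ (4*k+1) * g0 := by
      have e0 : g0 ^ q = (g0 * g0) ^ (2*k+1) * g0 := by
        have e00 : g0 ^ q = g0 ^ (4*k+3) := congrArg (g0 ^ ·) hk
        rw [e00, ← pow_two, ← pow_mul, ← pow_succ]
        congr 1
        omega
      rw [e0, ← hgJ, mul_pow]
      have e2 : g2 ^ (2*k+1) = (A:K)^(2*k) * g2 := by
        rw [pow_succ, pow_mul, pow_two, hg2sq, hpA, ← pow_mul]
      rw [e2]
      ring
    have hfr := hfrob χK
    rw [hχKq] at hfr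
    have hms := gaussSum_mulShift (χK ^ 3) ψp.char qu
    rw [hquv] at hms
    rw [← hfr, hg0qe] at hms
    -- hms : (χK^3) qF * (g2 * A^(4k+1) * g0) = g3
    have h5 : (A:K) * ((A:K))^(4*k+1) = 1 := by
      rw [← pow_succ']
      exact hAq1 _ (by omega)
    have hstep1 : (χK ^ 3 : MulChar (ZMod p) K) ((q : ZMod p)) * g2 * g0 = (A:K) * g3 := by
      linear_combination ((A:K)) * hms
        + (-( (χK ^ 3 : MulChar (ZMod p) K) ((q : ZMod p)) * g2 * g0)) * h5
    have hg0g3 : g0 * g3 = χK (-1 : ZMod p) * (p:K) := by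
      have h1 := gaussSum_mul_gaussSum_eq_card hχK1 ψp.prim
      have hinv3 : χK⁻¹ = χK ^ 3 := by
        apply inv_eq_of_mul_eq_one_right
        rw [← pow_succ']
        exact hχK4
      rw [hinv3, ZMod.card] at h1
      have h2 := hpsi (χK ^ 3)
      have hw3 : (χK ^ 3 : MulChar (ZMod p) K) (-1 : ZMod p) = χK (-1 : ZMod p) := by
        rw [MulChar.pow_apply' _ (by norm_num), pow_succ, pow_two, hw2, one_mul]
      rw [hw3, ← hg3def] at h2
      linear_combination χK (-1 : ZMod p) * h1 - g0 * h2
    have hu3w : (χK ^ 3 : MulChar (ZMod p) K) ((q : ZMod p)) = χK (-1 : ZMod p) := by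
      have h6 : (χK ^ 3 : MulChar (ZMod p) K) ((q : ZMod p)) * ((p:K) * (A:K))
          = χK (-1 : ZMod p) * ((p:K) * (A:K)) := by
        linear_combination g0 * hstep1
          + (χK ^ 3 : MulChar (ZMod p) K) ((q : ZMod p)) * g2 * hgJ
          + (A:K) * hg0g3
          - (χK ^ 3 : MulChar (ZMod p) K) ((q : ZMod p)) * (A:K) * hg2sq
      exact mul_right_cancel₀ (mul_ne_zero hpK0 hAK0) h6
    have hval : χK (-((q : ZMod p))) = 1 := by
      have hu4 : χK ((q : ZMod p)) ^ 4 = 1 := by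
        rw [← MulChar.pow_apply' _ (by norm_num), hχK4,
          MulChar.one_apply (isUnit_iff_ne_zero.mpr hqF)]
      have hsplit : χK (-((q : ZMod p))) = χK (-1 : ZMod p) * χK ((q : ZMod p)) := by
        rw [← map_mul, neg_one_mul]
      rw [hsplit, ← hu3w, MulChar.pow_apply' _ (by norm_num), ← pow_succ]
      exact hu4
    have hzne : (-((q : ZMod p))) ≠ 0 := neg_ne_zero.mpr hqF
    have hz4 : χ (-((q : ZMod p))) ^ 4 = 1 := by
      rw [← MulChar.pow_apply' _ (by norm_num), hχ4,
        MulChar.one_apply (isUnit_iff_ne_zero.mpr hzne)]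
    have hz1 : χ (-((q : ZMod p))) = 1 :=
      aux_z φ hK2 _ hz4 (by rw [← MulChar.ringHomComp_apply, ← hχKdef]; exact hval)
    obtain ⟨x, hx⟩ := hfourth _ hzne hz1
    refine final x ?_
    rw [hx]
    have hodd : ((-1:ℤ)) ^ ((q-1)/2) = -1 := by
      have h2k : (q-1)/2 = 2*k+1 := by omega
      rw [h2k, pow_succ, pow_mul]
      norm_num
    rw [hodd]
    push_cast
    ring
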